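/- The real subspace m' := ℝ·(H₊ + H₋) + {M_{c,1} : c ∈ ℍ} of m is a Lie triple system of real dimension 5. (This is the Lie triple system of type (S⁵, φ=π/4); the corresponding totally geodesic submanifold is a 5-sphere of radius 1/√2, all of whose nonzero tangent vectors have characteristic angle π/4.) -/

import Mathlib

open Matrix

noncomputable section

/-- The quaternions. -/
abbrev ℍq : Type := Quaternion ℝ

/-- The tangent space `m` of `G₂(ℍ^{n+2})`: the `n × 2` quaternionic matrices. -/
abbrev MatH (n : ℕ) : Type := Matrix (Fin n) (Fin 2) ℍq

/-- The curvature tensor of `G₂(ℍ^{n+2})`: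
`R(u,v)w = (u vᴴ − v uᴴ) w + w (vᴴ u − uᴴ v)`. -/
def Rcurv {n : ℕ} (u v w : MatH n) : MatH n :=
  (u * vᴴ - v * uᴴ) * w + w * (vᴴ * u - uᴴ * v)

/-- A subset of `m` is a Lie triple system if it is a real-linear subspace which is closed
under the curvature tensor. -/
def IsLTS {n : ℕ} (s : Set (MatH n)) : Prop :=
  (∃ p : Submodule ℝ (MatH n), (p : Set (MatH n)) = s) ∧
    ∀ u ∈ s, ∀ v ∈ s, ∀ w ∈ s, Rcurv u v w ∈ s

/-- The first row index (row "1" in the paper's 1-based notation). -/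
def r0 {n : ℕ} (hn : 2 ≤ n) : Fin n := ⟨0, by omega⟩

/-- The second row index (row "2" in the paper's 1-based notation). -/
def r1 {n : ℕ} (hn : 2 ≤ n) : Fin n := ⟨1, by omega⟩

/-- `q·E₁₁`: the matrix whose only nonzero entry is `q`, in position (1,1). -/
def E11 {n : ℕ} (hn : 2 ≤ n) (q : ℍq) : MatH n := Matrix.single (r0 hn) 0 q

/-- `q·E₂₂`: the matrix whose only nonzero entry is `q`, in position (2,2). -/
def E22 {n : ℕ} (hn : 2 ≤ n) (q : ℍq) : MatH n := Matrix.single (r1 hn) 1 q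

/-- `H₊ = E₁₁`. -/
def Hp {n : ℕ} (hn : 2 ≤ n) : MatH n := E11 hn 1

/-- `H₋ = E₂₂`. -/
def Hm {n : ℕ} (hn : 2 ≤ n) : MatH n := E22 hn 1

/-- The matrix `M_{c,ε}`: entry `(2,1)` equals `c/√2`, entry `(1,2)` equals `ε·conj(c)/√2`,
all other entries vanish. -/
def Mce {n : ℕ} (hn : 2 ≤ n) (c : ℍq) (ε : ℝ) : MatH n :=
  Matrix.single (r1 hn) 0 ((Real.sqrt 2)⁻¹ • c) +
    Matrix.single (r0 hn) 1 ((ε * (Real.sqrt 2)⁻¹) • star c)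

/-- The quaternionic inner product `⟨v,w⟩ = trace (vᴴ w)` on `m`. -/
def qip {n : ℕ} (v w : MatH n) : ℍq := Matrix.trace (vᴴ * w)

/-- The norm on `m`: `‖v‖ = √(Σ |v i j|²)`. -/
def hnorm {n : ℕ} (v : MatH n) : ℝ := Real.sqrt (∑ i, ∑ j, Quaternion.normSq (v i j))

/-- The symplectic group `Sp(k)` of quaternionic `k × k` matrices. -/
def SpH (k : ℕ) : Set (Matrix (Fin k) (Fin k) ℍq) := {B | Bᴴ * B = 1}

/-- The `j`-th column of a matrix in `m`. -/
def col {n : ℕ} (j : Fin 2) (v : MatH n) : Fin n → ℍq := fun i => v i j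

/-- The quaternionic inner product `⟨a,b⟩ = Σᵢ conj(aᵢ)·bᵢ` on `ℍⁿ`. -/
def vip {n : ℕ} (a b : Fin n → ℍq) : ℍq := ∑ i, star (a i) * b i

/-- The imaginary part `Im(q) = (q - conj q)/2` of a quaternion. -/
def imPart (q : ℍq) : ℍq := (q - star q) / 2

/-- Componentwise right multiplication of a vector by a quaternion. -/
def rightMulV {n : ℕ} (u : Fin n → ℍq) (c : ℍq) : Fin n → ℍq := fun i => u i * c

end

noncomputable section

section Helpers19

variable {n : ℕ}

lemma r0_ne_r1 (hn : 2 ≤ n) : r0 hn ≠ r1 hn := by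
  simp [r0, r1, Fin.ext_iff]

def Gm (hn : 2 ≤ n) (s : ℝ) (d : ℍq) : MatH n := Matrix.of fun i j =>
  if i = r0 hn then (if j = 0 then (s : ℍq) else star d)
  else if i = r1 hn then (if j = 0 then d else (s : ℍq)) else 0

@[simp] lemma Gm_00 (hn : 2 ≤ n) (s : ℝ) (d : ℍq) : Gm hn s d (r0 hn) 0 = (s : ℍq) := by
  simp [Gm]
@[simp] lemma Gm_01 (hn : 2 ≤ n) (s : ℝ) (d : ℍq) : Gm hn s d (r0 hn) 1 = star d := by
  simp [Gm]
@[simp] lemma Gm_10 (hn : 2 ≤ n) (s : ℝ) (d : ℍq) : Gm hn s d (r1 hn) 0 = d := by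
  simp [Gm, (r0_ne_r1 hn).symm]
@[simp] lemma Gm_11 (hn : 2 ≤ n) (s : ℝ) (d : ℍq) : Gm hn s d (r1 hn) 1 = (s : ℍq) := by
  simp [Gm, (r0_ne_r1 hn).symm]
lemma Gm_zero (hn : 2 ≤ n) (s : ℝ) (d : ℍq) {i : Fin n} (h0 : i ≠ r0 hn)
    (h1 : i ≠ r1 hn) (j : Fin 2) : Gm hn s d i j = 0 := by
  simp [Gm, h0, h1]

lemma smul_one_q (s : ℝ) : s • (1 : ℍq) = (s : ℍq) := by
  rw [← Quaternion.coe_one, Quaternion.smul_coe, mul_one]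

lemma repr_eq (hn : 2 ≤ n) (s : ℝ) (c : ℍq) :
    s • (Hp hn + Hm hn) + Mce hn c 1 = Gm hn s ((Real.sqrt 2)⁻¹ • c) := by
  have h01 := r0_ne_r1 hn
  refine Matrix.ext fun i j => ?_
  by_cases hi0 : i = r0 hn
  · subst hi0
    fin_cases j <;>
      simp [Gm, Hp, Hm, Mce, E11, E22, Matrix.single, h01, h01.symm,
        smul_one_q, star_smul]
  · by_cases hi1 : i = r1 hn
    · subst hi1
      fin_cases j <;>
        simp [Gm, Hp, Hm, Mce, E11, E22, Matrix.single, h01, h01.symm, hi0,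
          smul_one_q]
    · simp [Gm, Hp, Hm, Mce, E11, E22, Matrix.single, hi0, hi1,
        Ne.symm hi0, Ne.symm hi1]

lemma sum_two (hn : 2 ≤ n) (f : Fin n → ℍq)
    (h : ∀ l, l ≠ r0 hn → l ≠ r1 hn → f l = 0) :
    ∑ l, f l = f (r0 hn) + f (r1 hn) := by
  rw [← Finset.sum_pair (r0_ne_r1 hn)]
  refine (Finset.sum_subset (Finset.subset_univ _) ?_).symm
  intro x _ hx
  simp only [Finset.mem_insert, Finset.mem_singleton, not_or] at hx
  exact h x hx.1 hx.2

lemma sumZGm (hn : 2 ≤ n) (f : Fin n → ℍq) (r : ℝ) (e : ℍq) (j : Fin 2) :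
    (∑ l, f l * Gm hn r e l j)
      = f (r0 hn) * Gm hn r e (r0 hn) j + f (r1 hn) * Gm hn r e (r1 hn) j :=
  sum_two hn _ fun l h0 h1 => by rw [Gm_zero hn r e h0 h1, mul_zero]

lemma sumGmMul (hn : 2 ≤ n) (s : ℝ) (a : ℍq) (g : Fin n → ℍq) (p : Fin 2) :
    (∑ x, star (Gm hn s a x p) * g x)
      = star (Gm hn s a (r0 hn) p) * g (r0 hn) + star (Gm hn s a (r1 hn) p) * g (r1 hn) :=
  sum_two hn _ fun l h0 h1 => by rw [Gm_zero hn s a h0 h1, star_zero, zero_mul]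

set_option maxHeartbeats 1000000 in
lemma Rcurv_Gm (hn : 2 ≤ n) (s t r : ℝ) (a b e : ℍq) :
    Rcurv (Gm hn s a) (Gm hn t b) (Gm hn r e)
      = Gm hn 0 ((a * star b - b * star a) * e - e * (star a * b - star b * a)) := by
  have h01 := r0_ne_r1 hn
  refine Matrix.ext fun i j => ?_
  rw [Rcurv]
  simp only [Matrix.add_apply, Matrix.sub_apply, Matrix.mul_apply,
    Matrix.conjTranspose_apply, Fin.sum_univ_two, sumZGm hn, sumGmMul hn,
    Matrix.sub_apply]
  by_cases hi0 : i = r0 hn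
  · subst hi0
    fin_cases j <;>
      simp only [Gm_00, Gm_01, Gm_10, Gm_11, Quaternion.star_coe, star_star,
        Quaternion.coe_zero, star_zero, Fin.mk_zero, Fin.mk_one] <;>
      · simp only [← smul_one_q, star_sub, StarMul.star_mul, star_star, star_smul,
          star_trivial, star_one, smul_mul_assoc, mul_smul_comm, smul_smul, one_mul,
          mul_one, mul_sub, sub_mul, mul_add, add_mul, mul_assoc]
        module
  · by_cases hi1 : i = r1 hn
    · subst hi1
      fin_cases j <;>
        simp only [Gm_00, Gm_01, Gm_10, Gm_11, Quaternion.star_coe, star_star,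
          Quaternion.coe_zero, star_zero, Fin.mk_zero, Fin.mk_one] <;>
        · simp only [← smul_one_q, star_sub, StarMul.star_mul, star_star, star_smul,
            star_trivial, star_one, smul_mul_assoc, mul_smul_comm, smul_smul, one_mul,
            mul_one, mul_sub, sub_mul, mul_add, add_mul, mul_assoc]
          module
    · simp [Gm_zero hn _ _ hi0 hi1]
lemma Gm_linear_add (hn : 2 ≤ n) (s s' : ℝ) (d d' : ℍq) :
    Gm hn (s + s') (d + d') = Gm hn s d + Gm hn s' d' := by
  refine Matrix.ext fun i j => ?_
  by_cases hi0 : i = r0 hn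
  · subst hi0; fin_cases j <;> simp [Quaternion.coe_add, star_add]
  · by_cases hi1 : i = r1 hn
    · subst hi1; fin_cases j <;> simp [Quaternion.coe_add]
    · simp [Matrix.add_apply, Gm_zero hn _ _ hi0 hi1]

lemma Gm_linear_smul (hn : 2 ≤ n) (x s : ℝ) (d : ℍq) :
    Gm hn (x * s) (x • d) = x • Gm hn s d := by
  refine Matrix.ext fun i j => ?_
  by_cases hi0 : i = r0 hn
  · subst hi0
    fin_cases j <;>
      simp [Matrix.smul_apply, Quaternion.smul_coe, star_smul, star_trivial]
  · by_cases hi1 : i = r1 hn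
    · subst hi1; fin_cases j <;> simp [Matrix.smul_apply, Quaternion.smul_coe]
    · simp [Matrix.smul_apply, Gm_zero hn _ _ hi0 hi1]

def Lmap (hn : 2 ≤ n) : (ℝ × ℍq) →ₗ[ℝ] MatH n where
  toFun x := Gm hn x.1 x.2
  map_add' x y := Gm_linear_add hn x.1 y.1 x.2 y.2
  map_smul' r x := (Gm_linear_smul hn r x.1 x.2).symm ▸ rfl

lemma sqrt2_ne : (Real.sqrt 2) ≠ 0 := by positivity

lemma exists_Gm (hn : 2 ≤ n) (d : ℍq) :
    ∃ c : ℍq, (Real.sqrt 2)⁻¹ • c = d :=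
  ⟨Real.sqrt 2 • d, by rw [smul_smul, inv_mul_cancel₀ sqrt2_ne, one_smul]⟩

lemma set_eq_range (hn : 2 ≤ n) :
    {v : MatH n | ∃ s : ℝ, ∃ c : ℍq, v = s • (Hp hn + Hm hn) + Mce hn c 1}
      = ↑(LinearMap.range (Lmap hn)) := by
  ext v
  constructor
  · rintro ⟨s, c, rfl⟩
    exact ⟨(s, (Real.sqrt 2)⁻¹ • c), (repr_eq hn s c).symm⟩
  · rintro ⟨⟨s, d⟩, rfl⟩
    obtain ⟨c, hc⟩ := exists_Gm hn d
    exact ⟨s, c, by rw [repr_eq hn s c, hc]; rfl⟩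

lemma Lmap_inj (hn : 2 ≤ n) : Function.Injective (Lmap hn) := by
  rw [injective_iff_map_eq_zero]
  rintro ⟨s, d⟩ h
  have h1 : Gm hn s d (r0 hn) 0 = 0 := by rw [show Gm hn s d = Lmap hn (s, d) from rfl, h]; rfl
  have h2 : Gm hn s d (r1 hn) 0 = 0 := by rw [show Gm hn s d = Lmap hn (s, d) from rfl, h]; rfl
  rw [Gm_00] at h1
  rw [Gm_10] at h2
  have hs : s = 0 := Quaternion.coe_injective (by simpa using h1)
  simp [Prod.ext_iff, hs, h2]

lemma finrank_range (hn : 2 ≤ n) :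
    Module.finrank ℝ ↥(LinearMap.range (Lmap hn)) = 5 := by
  rw [LinearMap.finrank_range_of_inj (Lmap_inj hn)]
  rw [Module.finrank_prod, Module.finrank_self, Quaternion.finrank_eq_four]

lemma Gm_mem {n : ℕ} (hn : 2 ≤ n) (s : ℝ) (d : ℍq) :
    Gm hn s d ∈ {v : MatH n | ∃ s : ℝ, ∃ c : ℍq, v = s • (Hp hn + Hm hn) + Mce hn c 1} := by
  obtain ⟨c, hc⟩ := exists_Gm hn d
  exact ⟨s, c, by rw [repr_eq hn s c, hc]⟩

end Helpers19

/-- The Lie triple system of type `(S⁵, φ=π/4)`: the subspace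
`ℝ·(H₊+H₋) + {M_{c,1} : c ∈ ℍ}` of `m` is a Lie triple system of real dimension 5. -/
theorem stmt19 (n : ℕ) (hn : 2 ≤ n) :
    IsLTS {v : MatH n | ∃ s : ℝ, ∃ c : ℍq, v = s • (Hp hn + Hm hn) + Mce hn c 1} ∧
    ∀ p : Submodule ℝ (MatH n),
      (p : Set (MatH n)) =
        {v : MatH n | ∃ s : ℝ, ∃ c : ℍq, v = s • (Hp hn + Hm hn) + Mce hn c 1} →
      Module.finrank ℝ ↥p = 5 := by
  constructor
  · constructor
    · exact ⟨LinearMap.range (Lmap hn), (set_eq_range hn).symm⟩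
    · rintro u ⟨s, c, rfl⟩ v ⟨t, b, rfl⟩ w ⟨r, e, rfl⟩
      rw [repr_eq hn s c, repr_eq hn t b, repr_eq hn r e, Rcurv_Gm hn]
      exact Gm_mem hn 0 _
  · intro p hp
    have hpr : p = LinearMap.range (Lmap hn) :=
      SetLike.coe_injective (hp.trans (set_eq_range hn))
    rw [hpr]
    exact finrank_range hn


end
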